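/- Let 𝒩 be an ideal of subsets of Ω (∅ ∈ 𝒩; B ⊆ A ∈ 𝒩 implies B ∈ 𝒩; A, B ∈ 𝒩 implies A ∪ B ∈ 𝒩) with Ω ∉ 𝒩. Define f ≽ g if and only if {ω ∈ Ω : f(ω) − g(ω) ≤ −η} ∈ 𝒩 for every η > 0. Then ≽ is a regular stochastic order on F(Ω). -/
import Mathlib


/-- A regular stochastic order on `F(Ω)`: a reflexive and transitive binary relation
satisfying (TRIV), (CONE), (CERT), (APPR) and (REST). -/
def IsRegularOrder {Ω : Type*} (R : (Ω → ℝ) → (Ω → ℝ) → Prop) : Prop :=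
  Reflexive R ∧ Transitive R ∧
  ¬ R 0 1 ∧
  (∀ f₁ g₁ f₂ g₂ : Ω → ℝ, ∀ a₁ a₂ : ℝ, R f₁ g₁ → R f₂ g₂ → 0 ≤ a₁ → 0 ≤ a₂ →
    R (a₁ • f₁ + a₂ • f₂) (a₁ • g₁ + a₂ • g₂)) ∧
  (∀ f : Ω → ℝ, (0 : Ω → ℝ) ≤ f → R f 0) ∧
  (∀ f : Ω → ℝ, (∀ n : ℕ, R (f + fun _ => (2 : ℝ)⁻¹ ^ n) 0) → R f 0) ∧
  (∀ (f : Ω → ℝ) (A : Set Ω), R f 0 → R (A.indicator f) 0)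

/-- The order induced by an ideal `𝒩` of subsets of `Ω` with `Ω ∉ 𝒩`, namely
`f ≽ g ↔ {f - g ≤ -η} ∈ 𝒩 for all η > 0`, is a regular stochastic order. -/
theorem stmt_4 {Ω : Type*} [Nonempty Ω] (N : Set (Set Ω))
    (hempty : ∅ ∈ N)
    (hdown : ∀ A ∈ N, ∀ B, B ⊆ A → B ∈ N)
    (hunion : ∀ A ∈ N, ∀ B ∈ N, A ∪ B ∈ N)
    (huniv : Set.univ ∉ N)
    (R : (Ω → ℝ) → (Ω → ℝ) → Prop)
    (hR : ∀ f g, R f g ↔ ∀ η : ℝ, 0 < η → {ω | f ω - g ω ≤ -η} ∈ N) :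
    IsRegularOrder R := by
  refine ⟨?_, ?_, ?_, ?_, ?_, ?_, ?_⟩
  · -- Reflexive
    intro f
    rw [hR]
    intro η hη
    refine hdown ∅ hempty _ ?_
    intro ω hω
    simp only [Set.mem_setOf_eq, sub_self] at hω
    linarith
  · -- Transitive
    intro f g h hfg hgh
    rw [hR] at hfg hgh ⊢
    intro η hη
    have h1 := hfg (η/2) (by linarith)
    have h2 := hgh (η/2) (by linarith)
    refine hdown _ (hunion _ h1 _ h2) _ ?_
    intro ω hω
    simp only [Set.mem_setOf_eq, Set.mem_union] at hω ⊢
    by_contra hc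
    push_neg at hc
    linarith [hc.1, hc.2]
  · -- TRIV
    intro h
    rw [hR] at h
    have := h 1 one_pos
    apply huniv
    refine hdown _ this _ ?_
    intro ω _
    simp only [Set.mem_setOf_eq, Pi.zero_apply, Pi.one_apply]
    norm_num
  · -- CONE
    intro f₁ g₁ f₂ g₂ a₁ a₂ h1 h2 ha₁ ha₂
    rw [hR] at h1 h2 ⊢
    intro η hη
    have key : ∀ (a : ℝ) (f g : Ω → ℝ), 0 ≤ a →
        (∀ η : ℝ, 0 < η → {ω | f ω - g ω ≤ -η} ∈ N) →
        {ω | a * (f ω - g ω) ≤ -(η/2)} ∈ N := by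
      intro a f g ha hfg
      rcases eq_or_lt_of_le ha with rfl | hpos
      · refine hdown ∅ hempty _ ?_
        intro ω hω
        simp only [Set.mem_setOf_eq, zero_mul] at hω
        linarith
      · have := hfg (η / (2 * a)) (by positivity)
        refine hdown _ this _ ?_
        intro ω hω
        simp only [Set.mem_setOf_eq] at hω ⊢
        rw [show -(η/(2*a)) = (-(η/2))/a by field_simp, le_div_iff₀ hpos]
        nlinarith
    have k1 := key a₁ f₁ g₁ ha₁ h1
    have k2 := key a₂ f₂ g₂ ha₂ h2
    refine hdown _ (hunion _ k1 _ k2) _ ?_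
    intro ω hω
    simp only [Set.mem_setOf_eq, Set.mem_union, Pi.add_apply, Pi.smul_apply,
      smul_eq_mul] at hω ⊢
    by_contra hc
    push_neg at hc
    nlinarith [hc.1, hc.2]
  · -- CERT
    intro f hf
    rw [hR]
    intro η hη
    refine hdown ∅ hempty _ ?_
    intro ω hω
    simp only [Set.mem_setOf_eq, Pi.zero_apply, sub_zero] at hω
    have := hf ω
    simp only [Pi.zero_apply] at this
    linarith
  · -- APPR
    intro f hf
    rw [hR]
    intro η hη
    obtain ⟨n, hn⟩ := exists_pow_lt_of_lt_one (by linarith : (0:ℝ) < η/2)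
      (by norm_num : (2:ℝ)⁻¹ < 1)
    have := (hR _ _).mp (hf n) (η/2) (by linarith)
    refine hdown _ this _ ?_
    intro ω hω
    simp only [Set.mem_setOf_eq, Pi.add_apply, Pi.zero_apply, sub_zero] at hω ⊢
    linarith
  · -- REST
    intro f A hf
    rw [hR] at hf ⊢
    intro η hη
    refine hdown _ (hf η hη) _ ?_
    intro ω hω
    simp only [Set.mem_setOf_eq, Pi.zero_apply, sub_zero] at hω ⊢
    by_cases hA : ω ∈ A
    · rwa [Set.indicator_of_mem hA] at hω
    · rw [Set.indicator_of_notMem hA] at hω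
      linarith
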